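/- For the polynomial g(x0,x1,y0,y1,z0,z1) = x0y1 + x0z1 + x1y0 + x1y1z0 + x1y1z1 + y0z0, the quotient ring ℂ[x0,x1,y0,y1,z0,z1]/(∂g/∂x0, ∂g/∂x1, ∂g/∂y0, ∂g/∂y1, ∂g/∂z0, ∂g/∂z1) is a 4-dimensional ℂ-vector space. -/

import Mathlib

open MvPolynomial

/-- g = x0y1 + x0z1 + x1y0 + x1y1z0 + x1y1z1 + y0z0 with
(x0,x1,y0,y1,z0,z1) = (X 0,…,X 5). -/
noncomputable def g11 : MvPolynomial (Fin 6) ℂ :=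
  X 0 * X 3 + X 0 * X 5 + X 1 * X 2 + X 1 * X 3 * X 4 + X 1 * X 3 * X 5 + X 2 * X 4

set_option synthInstance.maxHeartbeats 1000000
set_option maxHeartbeats 2000000

section Aux11
open TrivSqZeroExt

/-! ### Partial derivatives of `g11` -/

lemma pd0 : pderiv (0 : Fin 6) g11 = X 3 + X 5 := by simp [g11, pderiv_X, Pi.single_apply]
lemma pd1 : pderiv (1 : Fin 6) g11 = X 2 + X 3 * X 4 + X 3 * X 5 := by
  simp [g11, pderiv_X, Pi.single_apply]; ring
lemma pd2 : pderiv (2 : Fin 6) g11 = X 1 + X 4 := by simp [g11, pderiv_X, Pi.single_apply]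
lemma pd3 : pderiv (3 : Fin 6) g11 = X 0 + X 1 * X 4 + X 1 * X 5 := by
  simp [g11, pderiv_X, Pi.single_apply]; ring
lemma pd4 : pderiv (4 : Fin 6) g11 = X 1 * X 3 + X 2 := by simp [g11, pderiv_X, Pi.single_apply]
lemma pd5 : pderiv (5 : Fin 6) g11 = X 0 + X 1 * X 3 := by simp [g11, pderiv_X, Pi.single_apply]

/-! ### The Jacobian ideal and relations in the quotient -/

noncomputable def I11 : Ideal (MvPolynomial (Fin 6) ℂ) :=
  Ideal.span ((Set.range fun i : Fin 6 => pderiv i g11))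

noncomputable def mk11 : MvPolynomial (Fin 6) ℂ →+* (MvPolynomial (Fin 6) ℂ ⧸ I11) :=
  Ideal.Quotient.mk I11

lemma z11 (i : Fin 6) : mk11 (pderiv i g11) = 0 :=
  Ideal.Quotient.eq_zero_iff_mem.mpr (Ideal.subset_span ⟨i, rfl⟩)

noncomputable abbrev a11 : MvPolynomial (Fin 6) ℂ ⧸ I11 := mk11 (X 1)
noncomputable abbrev b11 : MvPolynomial (Fin 6) ℂ ⧸ I11 := mk11 (X 3)

lemma r5 : mk11 (X 5) = -b11 := by
  have := z11 0; rw [pd0, map_add] at this; linear_combination this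

lemma r4 : mk11 (X 4) = -a11 := by
  have := z11 2; rw [pd2, map_add] at this; linear_combination this

lemma r0 : mk11 (X 0) = -(a11 * b11) := by
  have := z11 5; rw [pd5, map_add, map_mul] at this; linear_combination this

lemma r2 : mk11 (X 2) = -(a11 * b11) := by
  have := z11 4; rw [pd4, map_add, map_mul] at this; linear_combination this

lemma raa : a11 * a11 = -(2 * (a11 * b11)) := by
  have := z11 3
  rw [pd3, map_add, map_add, map_mul, map_mul, r0, r4, r5] at this
  linear_combination -this

lemma rbb : b11 * b11 = -(2 * (a11 * b11)) := by
  have := z11 1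
  rw [pd1, map_add, map_add, map_mul, map_mul, r2, r4, r5] at this
  linear_combination -this

lemma raab : a11 * a11 * b11 = 0 := by
  have h : (3 : ℂ) • (a11 * a11 * b11) = 0 := by
    rw [Algebra.smul_def (3:ℂ) (a11 * a11 * b11), map_ofNat]
    linear_combination -b11 * raa + 2 * a11 * rbb
  have := congrArg (fun y => ((3 : ℂ)⁻¹) • y) h
  simpa [smul_smul] using this

lemma rabb : a11 * (b11 * b11) = 0 := by
  have h : (3 : ℂ) • (a11 * (b11 * b11)) = 0 := by
    rw [Algebra.smul_def (3:ℂ) (a11 * (b11 * b11)), map_ofNat]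
    linear_combination -a11 * rbb + 2 * b11 * raa
  have := congrArg (fun y => ((3 : ℂ)⁻¹) • y) h
  simpa [smul_smul] using this

/-! ### The spanning family -/

noncomputable def s11 : Fin 4 → (MvPolynomial (Fin 6) ℂ ⧸ I11) := ![1, a11, b11, a11 * b11]

noncomputable def S11 : Submodule ℂ (MvPolynomial (Fin 6) ℂ ⧸ I11) :=
  Submodule.span ℂ (Set.range s11)

lemma mem1 : (1 : MvPolynomial (Fin 6) ℂ ⧸ I11) ∈ S11 := Submodule.subset_span ⟨0, rfl⟩
lemma memA : a11 ∈ S11 := Submodule.subset_span ⟨1, rfl⟩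
lemma memB : b11 ∈ S11 := Submodule.subset_span ⟨2, rfl⟩
lemma memAB : a11 * b11 ∈ S11 := Submodule.subset_span ⟨3, rfl⟩

lemma raa' : a11 * a11 = (-2 : ℂ) • (a11 * b11) := by
  rw [Algebra.smul_def (-2 : ℂ) (a11 * b11), map_neg, map_ofNat]
  linear_combination raa

lemma rbb' : b11 * b11 = (-2 : ℂ) • (a11 * b11) := by
  rw [Algebra.smul_def (-2 : ℂ) (a11 * b11), map_neg, map_ofNat]
  linear_combination rbb

lemma mulA : ∀ x ∈ S11, x * a11 ∈ S11 := by
  intro x hx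
  induction hx using Submodule.span_induction with
  | mem x hx =>
      obtain ⟨j, rfl⟩ := hx
      fin_cases j
      · simpa [s11] using memA
      · show a11 * a11 ∈ S11
        rw [raa']; exact S11.smul_mem _ memAB
      · show b11 * a11 ∈ S11
        rw [mul_comm]; exact memAB
      · show a11 * b11 * a11 ∈ S11
        have e : a11 * b11 * a11 = 0 := by linear_combination raab
        rw [e]; exact S11.zero_mem
  | zero => simpa using S11.zero_mem
  | add x y _ _ hx hy => rw [add_mul]; exact S11.add_mem hx hy
  | smul c x _ hx => rw [smul_mul_assoc]; exact S11.smul_mem _ hx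

lemma mulB : ∀ x ∈ S11, x * b11 ∈ S11 := by
  intro x hx
  induction hx using Submodule.span_induction with
  | mem x hx =>
      obtain ⟨j, rfl⟩ := hx
      fin_cases j
      · simpa [s11] using memB
      · show a11 * b11 ∈ S11
        exact memAB
      · show b11 * b11 ∈ S11
        rw [rbb']; exact S11.smul_mem _ memAB
      · show a11 * b11 * b11 ∈ S11
        have e : a11 * b11 * b11 = 0 := by linear_combination rabb
        rw [e]; exact S11.zero_mem
  | zero => simpa using S11.zero_mem
  | add x y _ _ hx hy => rw [add_mul]; exact S11.add_mem hx hy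
  | smul c x _ hx => rw [smul_mul_assoc]; exact S11.smul_mem _ hx

lemma span_top11 : S11 = ⊤ := by
  rw [eq_top_iff]
  rintro x -
  obtain ⟨p, rfl⟩ := Ideal.Quotient.mk_surjective x
  show mk11 p ∈ S11
  induction p using MvPolynomial.induction_on with
  | C r =>
      have e : mk11 (C r) = r • (1 : MvPolynomial (Fin 6) ℂ ⧸ I11) := by
        rw [Algebra.smul_def r (1 : MvPolynomial (Fin 6) ℂ ⧸ I11), mul_one]
        rfl
      rw [e]; exact S11.smul_mem _ mem1
  | add p q hp hq => rw [map_add]; exact S11.add_mem hp hq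
  | mul_X p n hp =>
      rw [map_mul]
      fin_cases n
      · show mk11 p * mk11 (X 0) ∈ S11
        have e : mk11 p * mk11 (X 0) = -((mk11 p * a11) * b11) := by
          rw [r0]; ring
        rw [e]; exact S11.neg_mem (mulB _ (mulA _ hp))
      · show mk11 p * mk11 (X 1) ∈ S11
        exact mulA _ hp
      · show mk11 p * mk11 (X 2) ∈ S11
        have e : mk11 p * mk11 (X 2) = -((mk11 p * a11) * b11) := by
          rw [r2]; ring
        rw [e]; exact S11.neg_mem (mulB _ (mulA _ hp))
      · show mk11 p * mk11 (X 3) ∈ S11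
        exact mulB _ hp
      · show mk11 p * mk11 (X 4) ∈ S11
        have e : mk11 p * mk11 (X 4) = -(mk11 p * a11) := by
          rw [r4]; ring
        rw [e]; exact S11.neg_mem (mulA _ hp)
      · show mk11 p * mk11 (X 5) ∈ S11
        have e : mk11 p * mk11 (X 5) = -(mk11 p * b11) := by
          rw [r5]; ring
        rw [e]; exact S11.neg_mem (mulB _ hp)

/-! ### A concrete model: nested dual numbers -/

noncomputable def ω11 : ℂ := (-1 + Real.sqrt 3 * Complex.I) / 2


lemma hω11 : ω11 ^ 2 + ω11 + 1 = 0 := by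
  have h3 : ((Real.sqrt 3 : ℝ) : ℂ) ^ 2 = 3 := by
    norm_cast
    rw [Real.sq_sqrt] <;> norm_num
  unfold ω11
  linear_combination (Complex.I ^ 2 / 4) * h3 + (3 / 4) * Complex.I_sq

lemma hω11_ne : ω11 ≠ 0 := by
  intro h
  apply_fun Complex.im at h
  simp [ω11, Complex.div_im] at h

lemma hω11_ne2 : 2 + ω11 ≠ 0 := by
  intro h
  apply_fun Complex.im at h
  simp [ω11, Complex.div_im] at h

abbrev D11 : Type := DualNumber (DualNumber ℂ)
noncomputable def u11 : D11 := DualNumber.eps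
noncomputable def v11 : D11 := inl DualNumber.eps
noncomputable def W11 : D11 := algebraMap ℂ D11 ω11
noncomputable def A1 : D11 := u11 + W11 * v11
noncomputable def A3 : D11 := W11 * u11 + v11

lemma hu11 : u11 * u11 = 0 := DualNumber.eps_mul_eps
lemma hv11 : v11 * v11 = 0 := by
  rw [v11, inl_mul_inl, DualNumber.eps_mul_eps, inl_zero]
lemma hW11 : W11 ^ 2 + W11 + 1 = 0 := by
  have := congrArg (algebraMap ℂ D11) hω11
  simpa [W11] using this

lemma W11_eq : W11 = inl (inl ω11) := by
  rw [W11, algebraMap_eq_inl']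
  norm_cast

lemma u11_eq : u11 = inr (inl 1) := by
  rw [u11, show (DualNumber.eps : D11) = inr (1 : DualNumber ℂ) from rfl, inl_one]

lemma v11_eq : v11 = inl (inr 1) := by
  rw [v11, show (DualNumber.eps : DualNumber ℂ) = inr (1 : ℂ) from rfl]

lemma A1_eq : A1 = inr (inl 1) + inl (inr ω11) := by
  rw [A1, u11_eq, v11_eq, W11_eq, inl_mul_inl, inl_mul_inr, smul_eq_mul, mul_one]

lemma A3_eq : A3 = inr (inl ω11) + inl (inr 1) := by
  rw [A3, u11_eq, v11_eq, W11_eq, inl_mul_inr, smul_eq_mul]; norm_num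

lemma A13_eq : A1 * A3 = inr (inr (ω11 ^ 2 + 1)) := by
  rw [A1_eq, A3_eq]
  ext <;> simp [fst_mul, snd_mul, mul_comm] <;> ring_nf

lemma indep11 (g : Fin 4 → ℂ)
    (hg : g 0 • (1 : D11) + g 1 • A1 + g 2 • A3 + g 3 • (A1 * A3) = 0) :
    g 0 = 0 ∧ g 1 = 0 ∧ g 2 = 0 ∧ g 3 = 0 := by
  rw [A13_eq, A1_eq, A3_eq] at hg
  have h1 := congrArg (fun z : D11 => z.fst.fst) hg
  have h2 := congrArg (fun z : D11 => z.fst.snd) hg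
  have h3 := congrArg (fun z : D11 => z.snd.fst) hg
  have h4 := congrArg (fun z : D11 => z.snd.snd) hg
  simp only [fst_add, snd_add, fst_smul, snd_smul, fst_inl, snd_inl, fst_inr, snd_inr,
    fst_one, snd_one, smul_eq_mul, smul_zero, mul_zero, add_zero, zero_add, mul_one,
    fst_zero, snd_zero] at h1 h2 h3 h4
  have hg1 : g 1 = 0 := by
    have h : (2 + ω11) * g 1 = 0 := by
      linear_combination h3 - ω11 * h2 + g 1 * hω11
    rcases mul_eq_zero.mp h with h | h
    · exact absurd h hω11_ne2
    · exact h
  have hg2 : g 2 = 0 := by linear_combination h2 - ω11 * hg1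
  have hg3 : g 3 = 0 := by
    have h : (-ω11) * g 3 = 0 := by linear_combination h4 - g 3 * hω11
    rcases mul_eq_zero.mp h with h | h
    · exact absurd (neg_eq_zero.mp h) hω11_ne
    · exact h
  exact ⟨h1, hg1, hg2, hg3⟩


/-! ### The evaluation map and linear independence -/

noncomputable def c11 : Fin 6 → D11 := ![-(A1 * A3), A1, -(A1 * A3), A3, -A1, -A3]

noncomputable def φ11 : MvPolynomial (Fin 6) ℂ →ₐ[ℂ] D11 := aeval c11

lemma cv0 : c11 0 = -(A1 * A3) := rfl
lemma cv1 : c11 1 = A1 := rfl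
lemma cv2 : c11 2 = -(A1 * A3) := rfl
lemma cv3 : c11 3 = A3 := rfl
lemma cv4 : c11 4 = -A1 := rfl
lemma cv5 : c11 5 = -A3 := rfl

lemma hker11 (i : Fin 6) : φ11 (pderiv i g11) = 0 := by
  fin_cases i
  · rw [show (⟨0, by norm_num⟩ : Fin 6) = (0 : Fin 6) from rfl, pd0]
    simp only [φ11, map_add, map_mul, aeval_X]
    show c11 3 + c11 5 = 0
    rw [cv3, cv5]; ring
  · rw [show (⟨1, by norm_num⟩ : Fin 6) = (1 : Fin 6) from rfl, pd1]
    simp only [φ11, map_add, map_mul, aeval_X]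
    show c11 2 + c11 3 * c11 4 + c11 3 * c11 5 = 0
    rw [cv2, cv3, cv4, cv5]
    unfold A1 A3
    linear_combination (-(W11 ^ 2) - 2 * W11) * hu11 + (-1 - 2 * W11) * hv11 -
      2 * u11 * v11 * hW11
  · rw [show (⟨2, by norm_num⟩ : Fin 6) = (2 : Fin 6) from rfl, pd2]
    simp only [φ11, map_add, aeval_X]
    show c11 1 + c11 4 = 0
    rw [cv1, cv4]; ring
  · rw [show (⟨3, by norm_num⟩ : Fin 6) = (3 : Fin 6) from rfl, pd3]
    simp only [φ11, map_add, map_mul, aeval_X]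
    show c11 0 + c11 1 * c11 4 + c11 1 * c11 5 = 0
    rw [cv0, cv1, cv4, cv5]
    unfold A1 A3
    linear_combination (-1 - 2 * W11) * hu11 + (-(W11 ^ 2) - 2 * W11) * hv11 -
      2 * u11 * v11 * hW11
  · rw [show (⟨4, by norm_num⟩ : Fin 6) = (4 : Fin 6) from rfl, pd4]
    simp only [φ11, map_add, map_mul, aeval_X]
    show c11 1 * c11 3 + c11 2 = 0
    rw [cv1, cv3, cv2]; ring
  · rw [show (⟨5, by norm_num⟩ : Fin 6) = (5 : Fin 6) from rfl, pd5]
    simp only [φ11, map_add, map_mul, aeval_X]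
    show c11 0 + c11 1 * c11 3 = 0
    rw [cv0, cv1, cv3]; ring

lemma hker11' : ∀ p ∈ I11, φ11 p = 0 := by
  intro p hp
  have hle : I11 ≤ RingHom.ker (φ11 : MvPolynomial (Fin 6) ℂ →+* D11) := by
    rw [I11, Ideal.span_le]
    rintro _ ⟨i, rfl⟩
    exact hker11 i
  exact hle hp

noncomputable def φbar11 : (MvPolynomial (Fin 6) ℂ ⧸ I11) →ₐ[ℂ] D11 :=
  Ideal.Quotient.liftₐ I11 φ11 hker11'

lemma φbar11_mk (p : MvPolynomial (Fin 6) ℂ) : φbar11 (mk11 p) = φ11 p := by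
  rw [φbar11, Ideal.Quotient.liftₐ_apply]
  exact Ideal.Quotient.lift_mk I11 _ _

lemma li11 : LinearIndependent ℂ s11 := by
  apply LinearIndependent.of_comp (φbar11.toLinearMap)
  have he : (φbar11.toLinearMap ∘ s11) = ![1, A1, A3, A1 * A3] := by
    funext j
    fin_cases j
    · show φbar11 (s11 0) = 1
      show φbar11 1 = 1
      exact map_one _
    · show φbar11 (s11 1) = A1
      show φbar11 (mk11 (X 1)) = A1
      rw [φbar11_mk]
      show aeval c11 (X 1) = A1
      rw [aeval_X]
      rfl
    · show φbar11 (s11 2) = A3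
      show φbar11 (mk11 (X 3)) = A3
      rw [φbar11_mk]
      show aeval c11 (X 3) = A3
      rw [aeval_X]
      rfl
    · show φbar11 (s11 3) = A1 * A3
      show φbar11 (mk11 (X 1) * mk11 (X 3)) = A1 * A3
      rw [map_mul, φbar11_mk, φbar11_mk]
      show aeval c11 (X 1) * aeval c11 (X 3) = A1 * A3
      rw [aeval_X, aeval_X]
      rfl
  rw [he]
  rw [Fintype.linearIndependent_iff]
  intro g hg
  rw [Fin.sum_univ_four] at hg
  simp only [Matrix.cons_val_zero, Matrix.cons_val_one, Matrix.head_cons,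
    Matrix.cons_val_two, Matrix.tail_cons, Matrix.cons_val_three] at hg
  obtain ⟨h0, h1, h2, h3⟩ := indep11 g hg
  intro i
  fin_cases i <;> assumption

noncomputable def basis11 : Module.Basis (Fin 4) ℂ (MvPolynomial (Fin 6) ℂ ⧸ I11) :=
  Module.Basis.mk li11 (le_of_eq span_top11.symm)

lemma main11 : Module.finrank ℂ (MvPolynomial (Fin 6) ℂ ⧸ I11) = 4 := by
  rw [Module.finrank_eq_card_basis basis11]
  simp

end Aux11

/-- The local algebra of g (quotient by the Jacobian ideal) is 4-dimensional. -/
theorem stmt_11 :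
    Module.finrank ℂ
      (MvPolynomial (Fin 6) ℂ ⧸
        Ideal.span ((Set.range fun i : Fin 6 => pderiv i g11))) = 4 := by
  exact main11
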